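/- Let k be a positive integer, set a = 1 − 1/(2k+3), and let G be a finite simple graph with a weight function w : V(G) → ℝ≥0. Suppose that for every induced subgraph H of G there exist a set D ⊆ V(H) with |D| ≤ k and an a-balanced separator S of (H, w restricted to V(H)) with S ⊆ ∪_{v ∈ D} N_H(v). Then there exist a set D' ⊆ V(G) with |D'| ≤ k(k+2) and a (2/3)-balanced separator S' of (G, w) with S' ⊆ ∪_{v ∈ D'} N_G(v). -/

import Mathlib

open SimpleGraph

/-- The total weight of a set of vertices. -/
noncomputable def wsum {V : Type*} (w : V → ℝ) (s : Set V) : ℝ := ∑ᶠ v ∈ s, w v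

/-- `X` is an `a`-balanced separator of the weighted graph `(G, w)`: every connected
component of `G − X` has weight at most `a` times the total weight. -/
def IsBalSep {V : Type*} (G : SimpleGraph V) (w : V → ℝ) (a : ℝ) (X : Set V) : Prop :=
  ∀ C : (G.induce Xᶜ).ConnectedComponent,
    wsum w (Subtype.val '' C.supp) ≤ a * wsum w Set.univ

lemma wsum_eq {V : Type*} (w : V → ℝ) (s : Set V) (hs : s.Finite) :
    wsum w s = ∑ v ∈ hs.toFinset, w v := by
  rw [wsum, ← finsum_mem_coe_finset, Set.Finite.coe_toFinset]

lemma wsum_mono {V : Type*} [Fintype V] (w : V → ℝ) (hw : ∀ v, 0 ≤ w v) {s t : Set V}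
    (hst : s ⊆ t) : wsum w s ≤ wsum w t := by
  rw [wsum_eq w s s.toFinite, wsum_eq w t t.toFinite]
  exact Finset.sum_le_sum_of_subset_of_nonneg (by simpa using hst) (fun v _ _ => hw v)

lemma wsum_nonneg' {V : Type*} [Fintype V] (w : V → ℝ) (hw : ∀ v, 0 ≤ w v) (s : Set V) :
    0 ≤ wsum w s := by
  rw [wsum_eq w s s.toFinite]; exact Finset.sum_nonneg fun v _ => hw v

lemma wsum_union {V : Type*} [Fintype V] (w : V → ℝ) {s t : Set V} (hst : Disjoint s t) :
    wsum w (s ∪ t) = wsum w s + wsum w t :=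
  finsum_mem_union hst s.toFinite t.toFinite

lemma wsum_image {V : Type*} {W : Set V} (w : V → ℝ) (s : Set ↥W) :
    wsum (fun v : ↥W => w ↑v) s = wsum w (Subtype.val '' s) := by
  rw [wsum, wsum, finsum_mem_image (Subtype.val_injective.injOn)]

lemma apow (k : ℕ) : (1 - 1/(2*(k:ℝ)+3))^(k+2) ≤ 2/3 := by
  have h1 : (0:ℝ) < 2*(k:ℝ)+2 := by positivity
  have h2 : (0:ℝ) < 2*(k:ℝ)+3 := by positivity
  have hb := one_add_mul_le_pow (a := 1/(2*(k:ℝ)+2))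
    (by linarith [one_div_nonneg.mpr h1.le]) (k+2)
  have key : (3/2 : ℝ) ≤ ((2*(k:ℝ)+3)/(2*(k:ℝ)+2))^(k+2) := by
    have h3 : (1:ℝ)/2 ≤ (↑(k+2) : ℝ) * (1/(2*(k:ℝ)+2)) := by
      rw [mul_one_div, le_div_iff₀ h1]
      push_cast; linarith
    have h4 : (2*(k:ℝ)+3)/(2*(k:ℝ)+2) = 1 + 1/(2*(k:ℝ)+2) := by field_simp; ring
    rw [h4]; linarith
  have ha : (1 - 1/(2*(k:ℝ)+3)) = ((2*(k:ℝ)+3)/(2*(k:ℝ)+2))⁻¹ := by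
    field_simp; ring
  rw [ha, inv_pow]
  calc (((2*(k:ℝ)+3)/(2*(k:ℝ)+2))^(k+2))⁻¹ ≤ (3/2 : ℝ)⁻¹ := by
        apply inv_anti₀ (by norm_num) key
    _ = 2/3 := by norm_num

/-- Lift a walk avoiding `T` whose support lies in `K` and avoids (the image of) `S`
to reachability in the doubly-induced graph. -/
lemma walk_lift {V : Type*} (G : SimpleGraph V) {T K : Set V} {S : Set ↥K}
    {u v : ↥Tᶜ} (p : (G.induce Tᶜ).Walk u v)
    (hp : ∀ x ∈ p.support, ∃ hx : (x:V) ∈ K, (⟨x, hx⟩ : ↥K) ∈ (Sᶜ : Set ↥K)) :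
    ∀ (hu : (u:V) ∈ K) (hu' : (⟨u, hu⟩:↥K) ∈ (Sᶜ : Set ↥K)) (hv : (v:V) ∈ K)
      (hv' : (⟨v, hv⟩:↥K) ∈ (Sᶜ : Set ↥K)),
      ((G.induce K).induce (Sᶜ : Set ↥K)).Reachable ⟨⟨u, hu⟩, hu'⟩ ⟨⟨v, hv⟩, hv'⟩ := by
  induction p with
  | nil => intros; exact Reachable.refl _
  | @cons a b c adj p' ih =>
    intro hu hu' hv hv'
    obtain ⟨hb1, hb2⟩ := hp b (by simp [Walk.support_cons])
    refine Reachable.trans ?_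
      (ih (fun x hx => hp x (by simp [Walk.support_cons, hx])) hb1 hb2 hv hv')
    exact Adj.reachable (by exact adj)

/-- Inclusion homomorphism between induced subgraphs. -/
def inclHom {V : Type*} (G : SimpleGraph V) {A B : Set V} (hAB : A ⊆ B) :
    G.induce A →g G.induce B := ⟨Set.inclusion hAB, fun {a b} h => h⟩

theorem stmt4 {V : Type*} [Fintype V] (G : SimpleGraph V) (w : V → ℝ)
    (hw : ∀ v, 0 ≤ w v) (k : ℕ) (hk : 0 < k)
    (h : ∀ W : Set V, ∃ D S : Set ↥W, D.ncard ≤ k ∧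
      S ⊆ (⋃ v ∈ D, (G.induce W).neighborSet v) ∧
      IsBalSep (G.induce W) (fun v => w v) (1 - 1 / (2 * k + 3)) S) :
    ∃ D' S' : Set V, D'.ncard ≤ k * (k + 2) ∧
      S' ⊆ (⋃ v ∈ D', G.neighborSet v) ∧
      IsBalSep G w (2 / 3) S' := by
  classical
  set a : ℝ := 1 - 1 / (2 * k + 3) with ha_def
  set Wt : ℝ := wsum w (Set.univ : Set V) with hWt_def
  have hWt0 : 0 ≤ Wt := wsum_nonneg' w hw _
  have ha0 : 0 ≤ a := by
    have h2 : (0:ℝ) < 2*(k:ℝ)+3 := by positivity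
    have : 1 / (2*(k:ℝ)+3) ≤ 1 := by
      rw [div_le_one h2]; linarith
    simp only [ha_def]; linarith
  -- Main invariant, by induction on the number of rounds.
  have key : ∀ i : ℕ, ∃ D' S' : Set V, D'.ncard ≤ k * i ∧
      S' ⊆ (⋃ v ∈ D', G.neighborSet v) ∧
      ∀ C : (G.induce S'ᶜ).ConnectedComponent,
        wsum w (Subtype.val '' C.supp) ≤ 2/3 * Wt ∨
        wsum w (Subtype.val '' C.supp) ≤ a ^ i * Wt := by
    intro i
    induction i with
    | zero =>
      refine ⟨∅, ∅, by simp, by simp, fun C => Or.inr ?_⟩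
      rw [pow_zero, one_mul]
      exact wsum_mono w hw (Set.subset_univ _)
    | succ i ih =>
      obtain ⟨D', S', hD, hS, hbal⟩ := ih
      by_cases hall : ∀ C : (G.induce S'ᶜ).ConnectedComponent,
          wsum w (Subtype.val '' C.supp) ≤ 2/3 * Wt
      · exact ⟨D', S', hD.trans (by nlinarith), hS, fun C => Or.inl (hall C)⟩
      push_neg at hall
      obtain ⟨C, hCheavy⟩ := hall
      set K : Set V := Subtype.val '' C.supp with hK_def
      obtain ⟨D, S, hDcard, hSsub, hbalK⟩ := h K
      refine ⟨D' ∪ Subtype.val '' D, S' ∪ Subtype.val '' S, ?_, ?_, ?_⟩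
      · calc (D' ∪ Subtype.val '' D).ncard ≤ D'.ncard + (Subtype.val '' D).ncard :=
              Set.ncard_union_le _ _
          _ ≤ k * i + k := by
              have : (Subtype.val '' D).ncard = D.ncard :=
                Set.ncard_image_of_injective _ Subtype.val_injective
              rw [this]; exact add_le_add hD hDcard
          _ = k * (i + 1) := by ring
      · intro x hx
        rcases hx with hx | hx
        · obtain ⟨d, hd⟩ := Set.mem_iUnion.mp (hS hx)
          obtain ⟨hd1, hd2⟩ := Set.mem_iUnion.mp hd
          exact Set.mem_iUnion.mpr ⟨d, Set.mem_iUnion.mpr ⟨Or.inl hd1, hd2⟩⟩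
        · obtain ⟨s, hs, rfl⟩ := hx
          obtain ⟨d, hd⟩ := Set.mem_iUnion.mp (hSsub hs)
          obtain ⟨hd1, hd2⟩ := Set.mem_iUnion.mp hd
          refine Set.mem_iUnion.mpr ⟨↑d, Set.mem_iUnion.mpr ⟨Or.inr ⟨d, hd1, rfl⟩, ?_⟩⟩
          exact hd2
      · intro Z
        -- Map Z into a component of `G.induce S'ᶜ`.
        have hsub : (S' ∪ Subtype.val '' S)ᶜ ⊆ S'ᶜ :=
          Set.compl_subset_compl.mpr Set.subset_union_left
        set C' : (G.induce S'ᶜ).ConnectedComponent := Z.map (inclHom G hsub) with hC'_def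
        have hZC' : Subtype.val '' Z.supp ⊆ Subtype.val '' C'.supp := by
          rintro _ ⟨z, hz, rfl⟩
          refine ⟨Set.inclusion hsub z, ?_, rfl⟩
          rw [ConnectedComponent.mem_supp_iff] at hz ⊢
          rw [hC'_def, ← hz]
          rfl
        have hZleC' : wsum w (Subtype.val '' Z.supp) ≤ wsum w (Subtype.val '' C'.supp) :=
          wsum_mono w hw hZC'
        rcases hbal C' with h23 | hai
        · exact Or.inl (hZleC'.trans h23)
        by_cases hC'C : C' = C
        · -- Z lies inside the heavy component C; use the new separator.
          right
          have hCK : Subtype.val '' C'.supp = K := by rw [hC'C]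
          have hZK : Subtype.val '' Z.supp ⊆ K := hZC'.trans hCK.subset
          obtain ⟨z₀, hz₀⟩ := Z.exists_rep
          -- every member of Z.supp lies in K and avoids S
          have hmem : ∀ z : ↥(S' ∪ Subtype.val '' S)ᶜ, z ∈ Z.supp →
              ∃ hz : (z:V) ∈ K, (⟨z, hz⟩ : ↥K) ∈ (Sᶜ : Set ↥K) := by
            intro z hz
            have h1 : (z:V) ∈ K := hZK ⟨z, hz, rfl⟩
            refine ⟨h1, ?_⟩
            intro hzS
            have : (z:V) ∈ Subtype.val '' S := ⟨⟨z, h1⟩, hzS, rfl⟩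
            exact z.2 (Or.inr this)
          have hz₀supp : z₀ ∈ Z.supp := by
            rw [ConnectedComponent.mem_supp_iff, ← hz₀]; rfl
          obtain ⟨h1z₀, h2z₀⟩ := hmem z₀ hz₀supp
          set Y := ((G.induce K).induce (Sᶜ : Set ↥K)).connectedComponentMk
            ⟨⟨z₀, h1z₀⟩, h2z₀⟩ with hY_def
          have himg : Subtype.val '' Z.supp ⊆
              Subtype.val '' (Subtype.val '' Y.supp) := by
            rintro _ ⟨z, hz, rfl⟩
            obtain ⟨h1z, h2z⟩ := hmem z hz
            -- z₀ reachable to z within the component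
            have hreach : (G.induce (S' ∪ Subtype.val '' S)ᶜ).Reachable z₀ z := by
              rw [← ConnectedComponent.eq]
              have h1 : (G.induce (S' ∪ Subtype.val '' S)ᶜ).connectedComponentMk z₀ = Z := hz₀
              rw [h1]
              exact ((ConnectedComponent.mem_supp_iff _ _).mp hz).symm
            obtain ⟨p⟩ := hreach
            have hsupp : ∀ x ∈ p.support,
                ∃ hx : (x:V) ∈ K, (⟨x, hx⟩ : ↥K) ∈ (Sᶜ : Set ↥K) := by
              intro x hx
              refine hmem x ?_
              have : (G.induce (S' ∪ Subtype.val '' S)ᶜ).Reachable z₀ x :=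
                (p.takeUntil x hx).reachable
              rw [ConnectedComponent.mem_supp_iff, ← hz₀]
              exact (ConnectedComponent.eq.mpr this.symm)
            have := walk_lift G p hsupp h1z₀ h2z₀ h1z h2z
            have hY : (⟨⟨z, h1z⟩, h2z⟩ : ↥(Sᶜ : Set ↥K)) ∈ Y.supp := by
              rw [ConnectedComponent.mem_supp_iff, hY_def]
              exact ConnectedComponent.eq.mpr this.symm
            exact ⟨⟨z, h1z⟩, ⟨⟨⟨z, h1z⟩, h2z⟩, hY, rfl⟩, rfl⟩
          have hYbound := hbalK Y
          rw [wsum_image, wsum_image] at hYbound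
          have himgK : Subtype.val '' (Set.univ : Set ↥K) = K := by
            simp
          rw [himgK] at hYbound
          have hKai : wsum w K ≤ a ^ i * Wt := (congrArg (wsum w) hCK).symm.trans_le hai
          calc wsum w (Subtype.val '' Z.supp)
              ≤ wsum w (Subtype.val '' (Subtype.val '' Y.supp)) := wsum_mono w hw himg
            _ ≤ a * wsum w K := hYbound
            _ ≤ a * (a ^ i * Wt) := by
                exact mul_le_mul_of_nonneg_left hKai ha0
            _ = a ^ (i+1) * Wt := by ring
        · -- C' ≠ C : C' cannot also be heavy.
          left
          refine hZleC'.trans ?_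
          by_contra hcon
          push_neg at hcon
          have hdisj : Disjoint C.supp C'.supp := by
            rw [Set.disjoint_left]
            intro x hx hx'
            rw [ConnectedComponent.mem_supp_iff] at hx hx'
            exact hC'C (hx'.symm.trans hx ▸ rfl)
          have hdisj2 : Disjoint (Subtype.val '' C.supp) (Subtype.val '' C'.supp) :=
            Set.disjoint_image_of_injective Subtype.val_injective hdisj
          have hsum : wsum w (Subtype.val '' C.supp) + wsum w (Subtype.val '' C'.supp) ≤ Wt := by
            rw [← wsum_union w hdisj2]
            exact wsum_mono w hw (Set.subset_univ _)
          have : 2/3 * Wt < wsum w (Subtype.val '' C'.supp) := hcon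
          have hCs : 2/3 * Wt < wsum w (Subtype.val '' C.supp) := hCheavy
          linarith
  obtain ⟨D', S', hD, hS, hbal⟩ := key (k + 2)
  refine ⟨D', S', hD, hS, fun C => ?_⟩
  rcases hbal C with h23 | hfin
  · exact h23.trans_eq (by norm_num [hWt_def])
  · refine hfin.trans ?_
    have : a ^ (k+2) * Wt ≤ 2/3 * Wt :=
      mul_le_mul_of_nonneg_right (by simpa [ha_def] using apow k) hWt0
    exact this.trans_eq (by norm_num [hWt_def])
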